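/- For r > 1, ρ > 0 and p ∈ P_r, the function B_ρ p(x) = x^{−ρ} ∫_0^x y^{ρ−1} p(y) dy satisfies the explicit formula B_ρ p(x) = r^{−ρ{log_r x}} [ (r^ρ − 1)^{−1} ∫_1^r s^{ρ−1} p(s) ds + ∫_1^{r^{{log_r x}}} s^{ρ−1} p(s) ds ], where {t} denotes the fractional part of t. In particular B_ρ p is continuous, positive, log-periodic with period r, and x^ρ B_ρ p(x) is nondecreasing. -/

import Mathlib

open Filter Set Real

/-- `p ∈ P_r`: positive, bounded, right-continuous, bounded away from `0` on `[1,r]`,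
and logarithmically periodic with period `r`. -/
def MemP (r : ℝ) (p : ℝ → ℝ) : Prop :=
  (∀ x > (0:ℝ), 0 < p x) ∧
  (∃ M : ℝ, ∀ x > (0:ℝ), p x ≤ M) ∧
  (∀ x > (0:ℝ), ContinuousWithinAt p (Set.Ici x) x) ∧
  (∃ c > (0:ℝ), ∀ x ∈ Set.Icc (1:ℝ) r, c ≤ p x) ∧
  (∀ x > (0:ℝ), p (x * r) = p x)

/-- `ℓ` is slowly varying at infinity (and eventually positive). -/
def SlowlyVarying (l : ℝ → ℝ) : Prop :=
  (∀ᶠ x in Filter.atTop, 0 < l x) ∧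
  ∀ lam > (0:ℝ),
    Filter.Tendsto (fun x : ℝ => l (lam * x) / l x) Filter.atTop (nhds 1)

/-- `f ∈ RL(p, r, ρ)` with slowly varying part `ℓ`:
`f(x rⁿ)/((x rⁿ)^ρ ℓ(x rⁿ)) → p(x)` at every continuity point `x > 0` of `p`. -/
def MemRL (f : ℝ → ℝ) (p : ℝ → ℝ) (r ρ : ℝ) (l : ℝ → ℝ) : Prop :=
  ∀ x > (0:ℝ), ContinuousAt p x →
    Filter.Tendsto (fun n : ℕ => f (x * r^n) / ((x * r^n) ^ ρ * l (x * r^n)))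
      Filter.atTop (nhds (p x))

/-- `f` is ultimately monotone: monotone (in either direction) on some `[x₀, ∞)`. -/
def UltimatelyMonotone (f : ℝ → ℝ) : Prop :=
  ∃ x₀ : ℝ, MonotoneOn f (Set.Ici x₀) ∨ AntitoneOn f (Set.Ici x₀)

/-- A function in `P_r` is measurable on `(0, ∞)` (as its indicator), since it is
right-continuous there. -/
lemma memP_measurable {r : ℝ} {p : ℝ → ℝ} (hp : MemP r p) :
    Measurable ((Set.Ioi (0:ℝ)).indicator p) := by
  have hrc := hp.2.2.1
  have hqm : ∀ n : ℕ, Measurable ((Set.Ioi (0:ℝ)).indicator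
      (fun x : ℝ => p ((↑(⌊x * 2 ^ n⌋ + 1)) / 2 ^ n))) := by
    intro n
    refine Measurable.indicator ?_ measurableSet_Ioi
    have h1 : Measurable fun x : ℝ => (⌊x * 2 ^ n⌋ : ℤ) :=
      Int.measurable_floor.comp (measurable_id.mul_const _)
    exact (Measurable.of_discrete (f := fun k : ℤ => p ((↑(k + 1)) / 2 ^ n))).comp h1
  apply measurable_of_tendsto_metrizable hqm
  rw [tendsto_pi_nhds]
  intro x
  by_cases hx : x ∈ Set.Ioi (0:ℝ)
  · simp only [Set.indicator_of_mem hx]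
    have key : Tendsto (fun n : ℕ => ((⌊x * 2 ^ n⌋ + 1 : ℤ) : ℝ) / 2 ^ n) atTop
        (nhdsWithin x (Set.Ici x)) := by
      rw [tendsto_nhdsWithin_iff]
      constructor
      · have hub : ∀ n : ℕ, ((⌊x * 2 ^ n⌋ + 1 : ℤ) : ℝ) / 2 ^ n ≤ x + (1/2 : ℝ) ^ n := by
          intro n
          rw [div_le_iff₀ (by positivity)]
          push_cast
          have := Int.floor_le (x * 2 ^ n)
          have h2 : ((1:ℝ)/2) ^ n * 2 ^ n = 1 := by
            rw [← mul_pow]; norm_num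
          nlinarith [this]
        have hlb : ∀ n : ℕ, x ≤ ((⌊x * 2 ^ n⌋ + 1 : ℤ) : ℝ) / 2 ^ n := by
          intro n
          rw [le_div_iff₀ (by positivity)]
          push_cast
          have := Int.lt_floor_add_one (x * 2 ^ n)
          linarith
        have h0 : Tendsto (fun n : ℕ => x + (1/2:ℝ) ^ n) atTop (nhds x) := by
          have := tendsto_pow_atTop_nhds_zero_of_lt_one (by norm_num : (0:ℝ) ≤ 1/2)
            (by norm_num : (1/2:ℝ) < 1)
          simpa using tendsto_const_nhds.add this
        exact tendsto_of_tendsto_of_tendsto_of_le_of_le tendsto_const_nhds h0 hlb hub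
      · refine Filter.Eventually.of_forall fun n => ?_
        rw [Set.mem_Ici, le_div_iff₀ (by positivity)]
        push_cast
        have := Int.lt_floor_add_one (x * 2 ^ n)
        linarith
    have hconv := (hrc x hx).tendsto.comp key
    exact hconv.congr' (Filter.Eventually.of_forall fun n => rfl)
  · simp only [Set.indicator_of_notMem hx]
    exact tendsto_const_nhds

/-- Explicit formula and structural properties of the operator `B_ρ`. -/
theorem statement_14 (p : ℝ → ℝ) (r ρ : ℝ) (hr : 1 < r) (hρ : 0 < ρ)
    (hp : MemP r p) :
    (∀ x > (0:ℝ),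
      x ^ (-ρ) * ∫ y in (0:ℝ)..x, y ^ (ρ - 1) * p y =
        r ^ (-(ρ * Int.fract (Real.logb r x))) *
          ((r ^ ρ - 1)⁻¹ * (∫ s in (1:ℝ)..r, s ^ (ρ - 1) * p s) +
            ∫ s in (1:ℝ)..(r ^ Int.fract (Real.logb r x)), s ^ (ρ - 1) * p s)) ∧
    ContinuousOn (fun x : ℝ => x ^ (-ρ) * ∫ y in (0:ℝ)..x, y ^ (ρ - 1) * p y)
      (Set.Ioi 0) ∧
    (∀ x > (0:ℝ), 0 < x ^ (-ρ) * ∫ y in (0:ℝ)..x, y ^ (ρ - 1) * p y) ∧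
    (∀ x > (0:ℝ),
      (x * r) ^ (-ρ) * (∫ y in (0:ℝ)..(x * r), y ^ (ρ - 1) * p y) =
        x ^ (-ρ) * ∫ y in (0:ℝ)..x, y ^ (ρ - 1) * p y) ∧
    MonotoneOn (fun x : ℝ => ∫ y in (0:ℝ)..x, y ^ (ρ - 1) * p y) (Set.Ioi 0) := by
  have hPmeas := memP_measurable hp
  obtain ⟨hppos, ⟨M, hM⟩, hrc, ⟨c, hc0, hc⟩, hper⟩ := hp
  have hr0 : (0:ℝ) < r := lt_trans one_pos hr
  set g : ℝ → ℝ := fun y => y ^ (ρ - 1) * p y with hgdef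
  set G : ℝ → ℝ := fun y => (Set.Ioi (0:ℝ)).indicator (fun t => Real.exp (Real.log t * (ρ - 1))) y *
      (Set.Ioi (0:ℝ)).indicator p y with hGdef
  have hGmeas : Measurable G :=
    (((Real.measurable_log.mul_const _).exp).indicator measurableSet_Ioi).mul hPmeas
  have hM0 : 0 < M := lt_of_lt_of_le (hppos 1 one_pos) (hM 1 one_pos)
  have hGg : ∀ ⦃y : ℝ⦄, 0 < y → G y = g y := by
    intro y hy
    have hy' : y ∈ Set.Ioi (0:ℝ) := hy
    simp only [hGdef, hgdef, Set.indicator_of_mem hy']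
    rw [← Real.rpow_def_of_pos hy]
  have hGnonneg : ∀ y, 0 ≤ G y := by
    intro y
    by_cases hy : y ∈ Set.Ioi (0:ℝ)
    · rw [hGg hy]
      exact mul_nonneg (Real.rpow_nonneg (le_of_lt hy) _) (hppos y hy).le
    · simp [hGdef, Set.indicator_of_notMem hy]
  have hGint : ∀ a b : ℝ, IntervalIntegrable G MeasureTheory.volume a b := by
    intro a b
    refine ((intervalIntegral.intervalIntegrable_rpow'
      (by linarith : (-1:ℝ) < ρ - 1)).const_mul M).mono_fun
      hGmeas.aestronglyMeasurable (MeasureTheory.ae_of_all _ fun y => ?_)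
    show ‖G y‖ ≤ ‖M * y ^ (ρ - 1)‖
    by_cases hy : y ∈ Set.Ioi (0:ℝ)
    · have hy0 : (0:ℝ) < y := hy
      rw [hGg hy0]
      simp only [hgdef, Real.norm_eq_abs]
      rw [abs_of_nonneg (mul_nonneg (Real.rpow_nonneg hy0.le _) (hppos y hy0).le)]
      calc y ^ (ρ-1) * p y ≤ y ^ (ρ-1) * M :=
            mul_le_mul_of_nonneg_left (hM y hy0) (Real.rpow_nonneg hy0.le _)
        _ = M * y ^ (ρ-1) := mul_comm _ _
        _ ≤ |M * y ^ (ρ-1)| := le_abs_self _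
    · simp only [hGdef, Set.indicator_of_notMem hy, mul_zero, zero_mul, norm_zero]
      positivity
  have hIeq : ∀ a b : ℝ, 0 ≤ a → 0 ≤ b →
      (∫ y in a..b, g y) = ∫ y in a..b, G y := by
    intro a b ha hb
    refine intervalIntegral.integral_congr_ae
      (Filter.Eventually.of_forall fun y hy => ?_)
    rcases Set.mem_uIoc.1 hy with h | h
    · exact (hGg (lt_of_le_of_lt ha h.1)).symm
    · exact (hGg (lt_of_le_of_lt hb h.1)).symm
  have hgint : ∀ a b : ℝ, 0 ≤ a → 0 ≤ b → IntervalIntegrable g MeasureTheory.volume a b := by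
    intro a b ha hb
    refine (hGint a b).congr ?_
    refine fun y hy => ?_
    rcases Set.mem_uIoc.1 hy with h | h
    · exact hGg (lt_of_le_of_lt ha h.1)
    · exact hGg (lt_of_le_of_lt hb h.1)
  -- scaling of integrals
  have hscaleI : ∀ a b : ℝ, 0 ≤ a → 0 ≤ b →
      (∫ s in a*r..b*r, g s) = r ^ ρ * ∫ s in a..b, g s := by
    intro a b ha hb
    rw [← intervalIntegral.smul_integral_comp_mul_right g r]
    have h1 : (∫ x in a..b, g (x * r)) = ∫ x in a..b, r ^ (ρ-1) * g x := by
      refine intervalIntegral.integral_congr_ae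
        (Filter.Eventually.of_forall fun y hy => ?_)
      have hy0 : 0 < y := by
        rcases Set.mem_uIoc.1 hy with h | h
        · exact lt_of_le_of_lt ha h.1
        · exact lt_of_le_of_lt hb h.1
      simp only [hgdef]
      rw [hper y hy0, Real.mul_rpow hy0.le hr0.le]
      ring
    rw [h1, intervalIntegral.integral_const_mul, smul_eq_mul, ← mul_assoc]
    congr 1
    have h2 : r ^ ((1:ℝ) + (ρ - 1)) = r ^ (1:ℝ) * r ^ (ρ - 1) := Real.rpow_add hr0 _ _
    rw [Real.rpow_one] at h2
    rw [← h2]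
    norm_num
  have hFscale : ∀ x : ℝ, 0 < x →
      (∫ y in (0:ℝ)..(x * r), g y) = r ^ ρ * ∫ y in (0:ℝ)..x, g y := by
    intro x hx
    have := hscaleI 0 x le_rfl hx.le
    simpa using this
  have hrρ : (0:ℝ) < r ^ ρ := Real.rpow_pos_of_pos hr0 _
  -- integer powers
  have hFz : ∀ (n : ℤ) (x : ℝ), 0 < x →
      (∫ y in (0:ℝ)..(x * r ^ n), g y) = (r ^ ρ) ^ n * ∫ y in (0:ℝ)..x, g y := by
    intro n
    induction n using Int.induction_on with
    | zero => intro x hx; simp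
    | succ k ih =>
        intro x hx
        rw [zpow_add₀ (ne_of_gt hr0), zpow_one, zpow_add₀ (ne_of_gt hrρ), zpow_one,
          ← mul_assoc, hFscale _ (by positivity), ih x hx]
        ring
    | pred k ih =>
        intro x hx
        have key := hFscale (x * r ^ (-(k:ℤ) - 1)) (by positivity)
        rw [mul_assoc, ← zpow_add_one₀ (ne_of_gt hr0)] at key
        have hsimp : -(k:ℤ) - 1 + 1 = -(k:ℤ) := by ring
        rw [hsimp, ih x hx] at key
        have hz : (r ^ ρ) ^ (-(k:ℤ) - 1) = (r ^ ρ) ^ (-(k:ℤ)) / (r ^ ρ) := by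
          rw [zpow_sub₀ (ne_of_gt hrρ), zpow_one]
        rw [hz]
        field_simp at key ⊢
        linarith [key]
  have hr1 : (1:ℝ) < r ^ ρ := by
    have := (Real.rpow_lt_rpow_left_iff hr).2 hρ
    rwa [Real.rpow_zero] at this
  have hI : (∫ y in (0:ℝ)..(1:ℝ), g y) = (r ^ ρ - 1)⁻¹ * ∫ s in (1:ℝ)..r, g s := by
    have hadd := intervalIntegral.integral_add_adjacent_intervals
      (hgint 0 1 le_rfl zero_le_one) (hgint 1 r zero_le_one hr0.le)
    have hsc := hFscale 1 one_pos
    rw [one_mul] at hsc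
    have hne : r ^ ρ - 1 ≠ 0 := by linarith
    field_simp
    nlinarith [hadd, hsc]
  refine ⟨?_, ?_, ?_, ?_, ?_⟩
  · -- explicit formula
    intro x hx
    set t := Real.logb r x with ht
    set θ := Int.fract t with hθ
    have hθ0 : (0:ℝ) ≤ θ := Int.fract_nonneg t
    have hu0 : (0:ℝ) < r ^ θ := Real.rpow_pos_of_pos hr0 θ
    have hxt : r ^ t = x := Real.rpow_logb hr0 (ne_of_gt hr) hx
    have hteq : t = θ + (⌊t⌋:ℝ) := by rw [hθ, Int.fract]; ring
    have hxeq : x = r ^ θ * r ^ (⌊t⌋ : ℤ) := by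
      rw [← hxt, ← Real.rpow_intCast r ⌊t⌋, ← Real.rpow_add hr0, ← hteq]
    have hFx : (∫ y in (0:ℝ)..x, g y) =
        (r ^ ρ) ^ (⌊t⌋ : ℤ) * ∫ y in (0:ℝ)..(r ^ θ), g y := by
      rw [hxeq]; exact hFz ⌊t⌋ _ hu0
    have hFu : (∫ y in (0:ℝ)..(r ^ θ), g y) =
        (∫ y in (0:ℝ)..(1:ℝ), g y) + ∫ s in (1:ℝ)..(r ^ θ), g s :=
      (intervalIntegral.integral_add_adjacent_intervals (hgint 0 1 le_rfl zero_le_one)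
        (hgint 1 _ zero_le_one hu0.le)).symm
    have hxρ : x ^ (-ρ) * (r ^ ρ) ^ (⌊t⌋ : ℤ) = r ^ (-(ρ * θ)) := by
      rw [← hxt, ← Real.rpow_intCast (r ^ ρ) ⌊t⌋, ← Real.rpow_mul hr0.le,
        ← Real.rpow_mul hr0.le, ← Real.rpow_add hr0]
      congr 1
      rw [hθ]
      linear_combination ρ * (Int.floor_add_fract t)
    rw [hFx, hFu, hI, ← mul_assoc, hxρ]
  · -- continuity
    have hHcont : Continuous (fun x : ℝ => ∫ y in (0:ℝ)..x, G y) :=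
      intervalIntegral.continuous_primitive hGint 0
    have hxcont : ContinuousOn (fun x : ℝ => x ^ (-ρ)) (Set.Ioi 0) := fun x hx =>
      (Real.continuousAt_rpow_const x (-ρ) (Or.inl (ne_of_gt hx))).continuousWithinAt
    refine (hxcont.mul hHcont.continuousOn).congr fun x hx => ?_
    show x ^ (-ρ) * (∫ y in (0:ℝ)..x, g y) = x ^ (-ρ) * ∫ y in (0:ℝ)..x, G y
    rw [hIeq 0 x le_rfl (le_of_lt hx)]
  · -- positivity
    intro x hx
    have h1 : (0:ℝ) ≤ ∫ y in (0:ℝ)..(x/2), g y := by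
      rw [hIeq 0 (x/2) le_rfl (by linarith)]
      exact intervalIntegral.integral_nonneg (by linarith) fun u _ => hGnonneg u
    have h2 : 0 < ∫ y in (x/2)..x, g y := by
      refine intervalIntegral.intervalIntegral_pos_of_pos_on
        (hgint _ _ (by linarith) hx.le) (fun y hy => ?_) (by linarith)
      have hy0 : 0 < y := lt_trans (by linarith) hy.1
      exact mul_pos (Real.rpow_pos_of_pos hy0 _) (hppos y hy0)
    have hadd := intervalIntegral.integral_add_adjacent_intervals
      (hgint 0 (x/2) le_rfl (by linarith)) (hgint (x/2) x (by linarith) hx.le)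
    have h3 : 0 < ∫ y in (0:ℝ)..x, g y := by rw [← hadd]; linarith
    exact mul_pos (Real.rpow_pos_of_pos hx _) h3
  · -- log-periodicity
    intro x hx
    rw [hFscale x hx, Real.mul_rpow hx.le hr0.le, Real.rpow_neg hr0.le]
    field_simp
  · -- monotonicity
    intro a ha b hb hab
    have hadd := intervalIntegral.integral_add_adjacent_intervals
      (hgint 0 a le_rfl (le_of_lt ha)) (hgint a b (le_of_lt ha) (le_trans (le_of_lt ha) hab))
    have hnn : 0 ≤ ∫ y in a..b, g y := by
      refine intervalIntegral.integral_nonneg hab fun u hu => ?_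
      have hu0 : 0 < u := lt_of_lt_of_le ha hu.1
      exact mul_nonneg (Real.rpow_nonneg hu0.le _) (hppos u hu0).le
    show (∫ y in (0:ℝ)..a, g y) ≤ ∫ y in (0:ℝ)..b, g y
    linarith [hadd]
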